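/- Let G be the complete bipartite graph K_{⌊n/2⌋,⌈n/2⌉} on n vertices. Then every clique cover of G (a family of complete subgraphs covering all edges and all vertices) has at least ⌊n²/4⌋ members, and the 0/1 symmetric matrix with zero diagonal whose off-diagonal zeros are the edges of G has symmetric Barvinok rank exactly ⌊n²/4⌋. -/

import Mathlib

/-- `M` equals the entrywise (tropical) minimum of the family of matrices `N k`. -/
def TropMinDecomp {n r : ℕ} (M : Fin n → Fin n → ℝ) (N : Fin r → Fin n → Fin n → ℝ) : Prop :=
  ∀ i j, (∀ k, M i j ≤ N k i j) ∧ (∃ k, M i j = N k i j)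

/-- `M` has symmetric Barvinok rank at most `r`. -/
def SymRankLe {n : ℕ} (r : ℕ) (M : Fin n → Fin n → ℝ) : Prop :=
  ∃ v : Fin r → Fin n → ℝ, TropMinDecomp M (fun k i j => v k i + v k j)

/-- A family of `r` cliques of the zero-graph of `M` covering every vertex and
every edge (zero off-diagonal entry) of that graph. -/
def IsCliqueCover {n : ℕ} (M : Fin n → Fin n → ℝ) (r : ℕ) (S : Fin r → Finset (Fin n)) : Prop :=
  (∀ k, ∀ i ∈ S k, ∀ j ∈ S k, M i j = 0) ∧
  (∀ i : Fin n, ∃ k, i ∈ S k) ∧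
  (∀ i j : Fin n, i ≠ j → M i j = 0 → ∃ k, i ∈ S k ∧ j ∈ S k)

/-- The 0/1 symmetric matrix with zero diagonal whose off-diagonal zeros are
exactly the edges of the complete bipartite graph `K_{⌊n/2⌋,⌈n/2⌉}`
(parts `{i : i < ⌊n/2⌋}` and its complement). -/
noncomputable def bipartiteMatrix (n : ℕ) : Fin n → Fin n → ℝ := fun i j =>
  if i = j then 0 else if (((i : ℕ) < n / 2) ↔ ((j : ℕ) < n / 2)) then 1 else 0

lemma key (n : ℕ) : n ^ 2 / 4 = (n / 2) * (n - n / 2) := by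
  rcases Nat.even_or_odd' n with ⟨a, rfl | rfl⟩
  · have h1 : 2 * a / 2 = a := by omega
    have h2 : 2 * a - a = a := by omega
    rw [h1, h2]
    have h3 : (2*a)^2 = (a * a) * 4 := by ring
    rw [h3, Nat.mul_div_cancel _ (by norm_num)]
  · have h1 : (2 * a + 1) / 2 = a := by omega
    have h2 : 2 * a + 1 - a = a + 1 := by omega
    rw [h1, h2]
    have h3 : (2*a+1)^2 = (a * (a+1)) * 4 + 1 := by ring
    rw [h3]
    omega

lemma bm_diag (n : ℕ) (i : Fin n) : bipartiteMatrix n i i = 0 := by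
  simp [bipartiteMatrix]

lemma bm_nonneg (n : ℕ) (i j : Fin n) : 0 ≤ bipartiteMatrix n i j := by
  unfold bipartiteMatrix; split_ifs <;> norm_num

lemma bm_cross (n : ℕ) (i j : Fin n) (h : ¬(((i : ℕ) < n / 2) ↔ ((j : ℕ) < n / 2))) :
    bipartiteMatrix n i j = 0 := by
  have hij : i ≠ j := by
    intro he; subst he; exact h Iff.rfl
  simp [bipartiteMatrix, hij, h]

lemma bm_same (n : ℕ) (i j : Fin n) (hij : i ≠ j)
    (h : ((i : ℕ) < n / 2) ↔ ((j : ℕ) < n / 2)) : bipartiteMatrix n i j = 1 := by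
  simp [bipartiteMatrix, hij, h]

/-- Lower bound for clique covers. -/
lemma cover_lower (n : ℕ) (hn : 2 ≤ n) (r : ℕ) (S : Fin r → Finset (Fin n))
    (hS : IsCliqueCover (bipartiteMatrix n) r S) : n ^ 2 / 4 ≤ r := by
  classical
  obtain ⟨hclique, hvert, hedge⟩ := hS
  set a := n / 2 with ha
  have ha1 : 1 ≤ a := by omega
  have han : a < n := by omega
  have hr : 0 < r := by
    obtain ⟨k, _⟩ := hvert ⟨0, by omega⟩
    exact k.pos
  haveI : Inhabited (Fin r) := ⟨⟨0, hr⟩⟩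
  set A : Finset (Fin n) := Finset.univ.filter (fun i : Fin n => (i : ℕ) < a) with hA
  set B : Finset (Fin n) := Finset.univ.filter (fun i : Fin n => ¬ (i : ℕ) < a) with hB
  have hAcard : A.card = a := by
    have : A = (Finset.range a).attachFin (fun m hm => by
        simp only [Finset.mem_range] at hm; omega) := by
      ext i
      simp [hA, Finset.mem_attachFin]
    rw [this, Finset.card_attachFin, Finset.card_range]
  have hBcard : B.card = n - a := by
    have htot := Finset.card_filter_add_card_filter_not
      (s := (Finset.univ : Finset (Fin n))) (p := fun i : Fin n => (i : ℕ) < a)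
    simp only [Finset.card_univ, Fintype.card_fin] at htot
    rw [← hA, ← hB] at htot
    omega
  have hex : ∀ p : Fin n × Fin n, p ∈ A ×ˢ B → ∃ k, p.1 ∈ S k ∧ p.2 ∈ S k := by
    intro p hp
    rw [Finset.mem_product] at hp
    simp only [hA, hB, Finset.mem_filter, Finset.mem_univ, true_and] at hp
    apply hedge
    · intro h
      rw [h] at hp
      exact hp.2 hp.1
    · exact bm_cross n p.1 p.2 (by rw [← ha]; tauto)
  set f : Fin n × Fin n → Fin r := fun p =>
    if h : p ∈ A ×ˢ B then (hex p h).choose else default with hf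
  have hfspec : ∀ p ∈ A ×ˢ B, p.1 ∈ S (f p) ∧ p.2 ∈ S (f p) := by
    intro p hp
    simp only [hf, dif_pos hp]
    exact (hex p hp).choose_spec
  have hinj : Set.InjOn f ↑(A ×ˢ B) := by
    intro p hp q hq hpq
    rw [Finset.mem_coe] at hp hq
    have hp' := hfspec p hp
    have hq' := hfspec q hq
    rw [hpq] at hp'
    rw [Finset.mem_product] at hp hq
    simp only [hA, hB, Finset.mem_filter, Finset.mem_univ, true_and] at hp hq
    have h1 : p.1 = q.1 := by
      by_contra hne
      have := hclique _ _ hp'.1 _ hq'.1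
      rw [bm_same n p.1 q.1 hne (by rw [← ha]; tauto)] at this
      exact one_ne_zero this
    have h2 : p.2 = q.2 := by
      by_contra hne
      have := hclique _ _ hp'.2 _ hq'.2
      rw [bm_same n p.2 q.2 hne (by rw [← ha]; tauto)] at this
      exact one_ne_zero this
    exact Prod.ext h1 h2
  have hcard := Finset.card_le_card_of_injOn f
    (fun p _ => Finset.mem_univ (f p)) hinj
  rw [Finset.card_product, hAcard, hBcard, Finset.card_univ, Fintype.card_fin] at hcard
  rw [key n, ← ha]
  exact hcard

theorem stmt3 (n : ℕ) (hn : 2 ≤ n) :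
    (∀ (r : ℕ) (S : Fin r → Finset (Fin n)),
        IsCliqueCover (bipartiteMatrix n) r S → n ^ 2 / 4 ≤ r) ∧
    SymRankLe (n ^ 2 / 4) (bipartiteMatrix n) ∧
    (∀ r : ℕ, SymRankLe r (bipartiteMatrix n) → n ^ 2 / 4 ≤ r) := by
  classical
  refine ⟨cover_lower n hn, ?_, ?_⟩
  · -- upper bound construction
    set a := n / 2 with ha
    set b := n - n / 2 with hb
    have ha1 : 1 ≤ a := by omega
    have hb1 : 1 ≤ b := by omega
    have hab : a + b = n := by omega
    have e : Fin (n ^ 2 / 4) ≃ Fin a × Fin b :=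
      (finCongr (key n)).trans finProdFinEquiv.symm
    refine ⟨fun k i =>
      if (i : ℕ) = ((e k).1 : ℕ) ∨ (i : ℕ) = a + ((e k).2 : ℕ) then 0 else 1, ?_⟩
    intro i j
    constructor
    · intro k
      dsimp only
      set p := ((e k).1 : ℕ) with hp
      set q := ((e k).2 : ℕ) with hq
      have hpa : p < a := (e k).1.isLt
      have hqb : q < b := (e k).2.isLt
      by_cases hi : (i : ℕ) = p ∨ (i : ℕ) = a + q
      · by_cases hj : (j : ℕ) = p ∨ (j : ℕ) = a + q
        · rw [if_pos hi, if_pos hj]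
          by_cases hij : i = j
          · subst hij; rw [bm_diag]; norm_num
          · have : ¬(((i : ℕ) < n / 2) ↔ ((j : ℕ) < n / 2)) := by
              have hvij : (i : ℕ) ≠ (j : ℕ) := fun h => hij (Fin.ext h)
              rw [← ha]
              rcases hi with hi | hi <;> rcases hj with hj | hj <;> omega
            rw [bm_cross n i j this]; norm_num
        · rw [if_pos hi, if_neg hj]
          have h01 : bipartiteMatrix n i j = 0 ∨ bipartiteMatrix n i j = 1 := by
            unfold bipartiteMatrix; split_ifs <;> simp
          rcases h01 with h | h <;> rw [h] <;> norm_num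
      · rw [if_neg hi]
        have h01 : bipartiteMatrix n i j = 0 ∨ bipartiteMatrix n i j = 1 := by
          unfold bipartiteMatrix; split_ifs <;> simp
        have : (0:ℝ) ≤ if (j : ℕ) = p ∨ (j : ℕ) = a + q then 0 else 1 := by
          split_ifs <;> norm_num
        rcases h01 with h | h <;> rw [h] <;> linarith
    · -- existence
      -- choose a witness pair (p, q) depending on the positions of i and j
      have use_pq : ∀ (p : Fin a) (q : Fin b),
          ∃ k : Fin (n ^ 2 / 4), (e k).1 = p ∧ (e k).2 = q := by
        intro p q
        exact ⟨e.symm (p, q), by simp, by simp⟩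
      by_cases hcr : ¬(((i : ℕ) < a) ↔ ((j : ℕ) < a))
      · -- cross edge (includes i ≠ j automatically)
        rcases Classical.em ((i : ℕ) < a) with hi | hi
        · have hj : ¬ (j : ℕ) < a := by tauto
          obtain ⟨k, hk1, hk2⟩ := use_pq ⟨(i : ℕ), hi⟩ ⟨(j : ℕ) - a, by omega⟩
          have hk1' : ((e k).1 : ℕ) = (i : ℕ) := by rw [hk1]
          have hk2' : ((e k).2 : ℕ) = (j : ℕ) - a := by rw [hk2]
          refine ⟨k, ?_⟩
          dsimp only
          rw [bm_cross n i j (by rw [← ha]; tauto)]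
          have h1 : (i : ℕ) = ((e k).1 : ℕ) ∨ (i : ℕ) = a + ((e k).2 : ℕ) := by omega
          have h2 : (j : ℕ) = ((e k).1 : ℕ) ∨ (j : ℕ) = a + ((e k).2 : ℕ) := by omega
          rw [if_pos h1, if_pos h2]
          norm_num
        · have hj : (j : ℕ) < a := by tauto
          obtain ⟨k, hk1, hk2⟩ := use_pq ⟨(j : ℕ), hj⟩ ⟨(i : ℕ) - a, by omega⟩
          have hk1' : ((e k).1 : ℕ) = (j : ℕ) := by rw [hk1]
          have hk2' : ((e k).2 : ℕ) = (i : ℕ) - a := by rw [hk2]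
          refine ⟨k, ?_⟩
          dsimp only
          rw [bm_cross n i j (by rw [← ha]; tauto)]
          have h1 : (i : ℕ) = ((e k).1 : ℕ) ∨ (i : ℕ) = a + ((e k).2 : ℕ) := by omega
          have h2 : (j : ℕ) = ((e k).1 : ℕ) ∨ (j : ℕ) = a + ((e k).2 : ℕ) := by omega
          rw [if_pos h1, if_pos h2]
          norm_num
      · push_neg at hcr
        by_cases hij : i = j
        · -- diagonal
          subst hij
          rcases Classical.em ((i : ℕ) < a) with hi | hi
          · obtain ⟨k, hk1, hk2⟩ := use_pq ⟨(i : ℕ), hi⟩ ⟨0, by omega⟩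
            have hk1' : ((e k).1 : ℕ) = (i : ℕ) := by rw [hk1]
            refine ⟨k, ?_⟩
            dsimp only
            rw [bm_diag]
            have h1 : (i : ℕ) = ((e k).1 : ℕ) ∨ (i : ℕ) = a + ((e k).2 : ℕ) := by omega
            rw [if_pos h1]
            norm_num
          · obtain ⟨k, hk1, hk2⟩ := use_pq ⟨0, by omega⟩ ⟨(i : ℕ) - a, by omega⟩
            have hk2' : ((e k).2 : ℕ) = (i : ℕ) - a := by rw [hk2]
            refine ⟨k, ?_⟩
            dsimp only
            rw [bm_diag]
            have h1 : (i : ℕ) = ((e k).1 : ℕ) ∨ (i : ℕ) = a + ((e k).2 : ℕ) := by omega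
            rw [if_pos h1]
            norm_num
        · -- same side, M = 1
          have hvij : (i : ℕ) ≠ (j : ℕ) := fun h => hij (Fin.ext h)
          rcases Classical.em ((i : ℕ) < a) with hi | hi
          · have hj : (j : ℕ) < a := hcr.mp hi
            obtain ⟨k, hk1, hk2⟩ := use_pq ⟨(i : ℕ), hi⟩ ⟨0, by omega⟩
            have hk1' : ((e k).1 : ℕ) = (i : ℕ) := by rw [hk1]
            have hk2' : ((e k).2 : ℕ) = 0 := by rw [hk2]
            refine ⟨k, ?_⟩
            dsimp only
            rw [bm_same n i j hij (by rw [← ha]; tauto)]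
            have h1 : (i : ℕ) = ((e k).1 : ℕ) ∨ (i : ℕ) = a + ((e k).2 : ℕ) := by omega
            have h2 : ¬((j : ℕ) = ((e k).1 : ℕ) ∨ (j : ℕ) = a + ((e k).2 : ℕ)) := by omega
            rw [if_pos h1, if_neg h2]
            norm_num
          · have hj : ¬ (j : ℕ) < a := fun h => hi (hcr.mpr h)
            obtain ⟨k, hk1, hk2⟩ := use_pq ⟨0, by omega⟩ ⟨(i : ℕ) - a, by omega⟩
            have hk1' : ((e k).1 : ℕ) = 0 := by rw [hk1]
            have hk2' : ((e k).2 : ℕ) = (i : ℕ) - a := by rw [hk2]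
            have hj0 : (j : ℕ) ≠ 0 := by omega
            refine ⟨k, ?_⟩
            dsimp only
            rw [bm_same n i j hij (by rw [← ha]; tauto)]
            have h1 : (i : ℕ) = ((e k).1 : ℕ) ∨ (i : ℕ) = a + ((e k).2 : ℕ) := by omega
            have h2 : ¬((j : ℕ) = ((e k).1 : ℕ) ∨ (j : ℕ) = a + ((e k).2 : ℕ)) := by omega
            rw [if_pos h1, if_neg h2]
            norm_num
  · -- rank lower bound via clique covers
    rintro r ⟨v, hv⟩
    have hvnn : ∀ k i, 0 ≤ v k i := by
      intro k i
      have h := (hv i i).1 k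
      dsimp only at h
      rw [bm_diag] at h
      linarith
    apply cover_lower n hn r (fun k => Finset.univ.filter (fun i => v k i = 0))
    refine ⟨?_, ?_, ?_⟩
    · intro k i hi j hj
      simp only [Finset.mem_filter, Finset.mem_univ, true_and] at hi hj
      have h := (hv i j).1 k
      dsimp only at h
      have h0 := bm_nonneg n i j
      rw [hi, hj] at h
      linarith
    · intro i
      obtain ⟨k, hk⟩ := (hv i i).2
      dsimp only at hk
      rw [bm_diag] at hk
      refine ⟨k, ?_⟩
      simp only [Finset.mem_filter, Finset.mem_univ, true_and]
      linarith [hvnn k i]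
    · intro i j hij hM
      obtain ⟨k, hk⟩ := (hv i j).2
      dsimp only at hk
      rw [hM] at hk
      refine ⟨k, ?_, ?_⟩ <;>
        simp only [Finset.mem_filter, Finset.mem_univ, true_and] <;>
        [skip; skip] <;> linarith [hvnn k i, hvnn k j]
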